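/- At any interior Nash equilibrium of the Transformed Random Access Game, Λ₁* = Λ₂*: the best-response function Λ₁*(Λ₂) defined implicitly by Λ₂/Λ₁ + 1 = α/(2(1 + Λ₁^{α/2})·log(1 + Λ₁^{−α/2})) is strictly monotonically increasing in Λ₂, which together with the symmetry of the utilities forces symmetric equilibria. -/

import Mathlib

open Real Set

private lemma phi_hasDeriv (t : ℝ) (ht : 0 < t) :
    HasDerivAt (fun t : ℝ => (1 + t) * (Real.log (1 + t) - Real.log t))
      (Real.log (1 + t) - Real.log t + (1 + t) * ((1 + t)⁻¹ - t⁻¹)) t := by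
  have h1 : HasDerivAt (fun t : ℝ => 1 + t) 1 t := (hasDerivAt_id t).const_add 1
  have h2 : HasDerivAt (fun t : ℝ => Real.log (1 + t)) ((1 + t)⁻¹ * 1) t :=
    (Real.hasDerivAt_log (by linarith : (1:ℝ) + t ≠ 0)).comp t h1
  have h3 : HasDerivAt (fun t : ℝ => Real.log t) t⁻¹ t := Real.hasDerivAt_log ht.ne'
  have : HasDerivAt (fun t : ℝ => (1 + t) * (Real.log (1 + t) - Real.log t))
      (1 * (Real.log (1 + t) - Real.log t) + (1 + t) * ((1 + t)⁻¹ * 1 - t⁻¹)) t :=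
    h1.mul (h2.sub h3)
  convert this using 1
  ring

private lemma phi_strictAnti :
    StrictAntiOn (fun t : ℝ => (1 + t) * (Real.log (1 + t) - Real.log t)) (Set.Ioi 0) := by
  apply strictAntiOn_of_deriv_neg (convex_Ioi 0)
  · exact fun x hx => (phi_hasDeriv x hx).continuousAt.continuousWithinAt
  · intro t ht
    rw [interior_Ioi] at ht
    have ht' : (0:ℝ) < t := ht
    rw [(phi_hasDeriv t ht').deriv]
    have hx : (0:ℝ) < (1 + t) / t := by positivity
    have hx1 : (1 + t) / t ≠ 1 := by
      intro h
      have := (div_eq_one_iff_eq ht'.ne').mp h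
      linarith
    have hlog : Real.log ((1 + t) / t) < (1 + t) / t - 1 :=
      Real.log_lt_sub_one_of_pos hx hx1
    rw [Real.log_div (by linarith) ht'.ne'] at hlog
    have he : (1 + t) * ((1 + t)⁻¹ - t⁻¹) = 1 - (1 + t) / t := by
      field_simp
    rw [he]
    linarith

private lemma phi_anti {s t : ℝ} (hs : 0 < s) (hst : s ≤ t) :
    (1 + t) * Real.log (1 + t⁻¹) ≤ (1 + s) * Real.log (1 + s⁻¹) := by
  have ht : 0 < t := lt_of_lt_of_le hs hst
  have hs' : 1 + s⁻¹ = (1 + s) / s := by field_simp; ring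
  have ht' : 1 + t⁻¹ = (1 + t) / t := by field_simp; ring
  rw [hs', ht', Real.log_div (by linarith) ht.ne', Real.log_div (by linarith) hs.ne']
  exact (phi_strictAnti.antitoneOn) (mem_Ioi.2 hs) (mem_Ioi.2 ht) hst

theorem interior_NE_symmetric (α : ℝ) (hα : 4 < α) :
    (∀ Λ₂ Λ₂' b b' : ℝ, 0 < Λ₂ → 0 < Λ₂' → 0 < b → 0 < b' →
      Λ₂ / b + 1 = α / (2 * (1 + b ^ (α / 2)) * Real.log (1 + b ^ (-(α / 2)))) →
      Λ₂' / b' + 1 = α / (2 * (1 + b' ^ (α / 2)) * Real.log (1 + b' ^ (-(α / 2)))) →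
      Λ₂ < Λ₂' → b < b') ∧
    (∀ Λ₁ Λ₂ : ℝ, 0 < Λ₁ → 0 < Λ₂ →
      Λ₂ / Λ₁ + 1 = α / (2 * (1 + Λ₁ ^ (α / 2)) * Real.log (1 + Λ₁ ^ (-(α / 2)))) →
      Λ₁ / Λ₂ + 1 = α / (2 * (1 + Λ₂ ^ (α / 2)) * Real.log (1 + Λ₂ ^ (-(α / 2)))) →
      Λ₁ = Λ₂) := by
  have hα0 : 0 < α := by linarith
  have hα2 : 0 < α / 2 := by linarith
  -- rewrite the neg exponent
  have key : ∀ Λ₂ Λ₂' b b' : ℝ, 0 < Λ₂ → 0 < Λ₂' → 0 < b → 0 < b' →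
      Λ₂ / b + 1 = α / (2 * (1 + b ^ (α / 2)) * Real.log (1 + b ^ (-(α / 2)))) →
      Λ₂' / b' + 1 = α / (2 * (1 + b' ^ (α / 2)) * Real.log (1 + b' ^ (-(α / 2)))) →
      Λ₂ < Λ₂' → b < b' := by
    intro Λ₂ Λ₂' b b' hΛ hΛ' hb hb' e1 e2 hlt
    by_contra hc
    push_neg at hc  -- b' ≤ b
    set t := b ^ (α / 2) with htdef
    set t' := b' ^ (α / 2) with ht'def
    have ht0 : 0 < t := Real.rpow_pos_of_pos hb _
    have ht0' : 0 < t' := Real.rpow_pos_of_pos hb' _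
    have htt : t' ≤ t := Real.rpow_le_rpow hb'.le hc hα2.le
    have hneg : b ^ (-(α / 2)) = t⁻¹ := by
      rw [htdef, ← Real.rpow_neg hb.le]
    have hneg' : b' ^ (-(α / 2)) = t'⁻¹ := by
      rw [ht'def, ← Real.rpow_neg hb'.le]
    rw [hneg] at e1
    rw [hneg'] at e2
    have hphi : (1 + t) * Real.log (1 + t⁻¹) ≤ (1 + t') * Real.log (1 + t'⁻¹) :=
      phi_anti ht0' htt
    have hpos : 0 < (1 + t) * Real.log (1 + t⁻¹) := by
      have : 0 < Real.log (1 + t⁻¹) := Real.log_pos (by simp; positivity)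
      positivity
    have hpos' : 0 < (1 + t') * Real.log (1 + t'⁻¹) := by
      have : 0 < Real.log (1 + t'⁻¹) := Real.log_pos (by simp; positivity)
      positivity
    -- ratio comparison
    have hdiv : α / (2 * ((1 + t') * Real.log (1 + t'⁻¹))) ≤
        α / (2 * ((1 + t) * Real.log (1 + t⁻¹))) := by
      apply div_le_div_of_nonneg_left hα0.le (by linarith)
      linarith
    have e1' : Λ₂ / b + 1 = α / (2 * ((1 + t) * Real.log (1 + t⁻¹))) := by
      rw [e1]; ring_nf
    have e2' : Λ₂' / b' + 1 = α / (2 * ((1 + t') * Real.log (1 + t'⁻¹))) := by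
      rw [e2]; ring_nf
    have hr : Λ₂' / b' ≤ Λ₂ / b := by
      have := e1' ▸ e2' ▸ hdiv
      linarith
    have hfin : Λ₂' ≤ Λ₂ := by
      have h1 : Λ₂' = (Λ₂' / b') * b' := (div_mul_cancel₀ _ hb'.ne').symm
      have h2 : Λ₂ = (Λ₂ / b) * b := (div_mul_cancel₀ _ hb.ne').symm
      have hr' : 0 < Λ₂' / b' := div_pos hΛ' hb'
      calc Λ₂' = (Λ₂' / b') * b' := h1
        _ ≤ (Λ₂ / b) * b' := by nlinarith
        _ ≤ (Λ₂ / b) * b := by nlinarith [div_pos hΛ hb]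
        _ = Λ₂ := h2.symm
    linarith
  refine ⟨key, ?_⟩
  intro Λ₁ Λ₂ h1 h2 e1 e2
  by_contra hne
  rcases lt_or_gt_of_ne hne with h | h
  · exact absurd (key Λ₁ Λ₂ Λ₂ Λ₁ h1 h2 h2 h1 e2 e1 h) (by linarith)
  · exact absurd (key Λ₂ Λ₁ Λ₁ Λ₂ h2 h1 h1 h2 e1 e2 h) (by linarith)
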